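/- arXiv:1708.02609 — 2 statements merged into one kernel-verified Lean document; each statement's English description precedes it below -/
import Mathlib

section
/- Let (V1, V2) be a pair of commuting isometries on a Hilbert space H, and set V = V1 V2, W = H ⊖ VH, W1 = H ⊖ V1 H, W2 = H ⊖ V2 H. Then W = W1 ⊕ V1 W2 = V2 W1 ⊕ W2, where each decomposition is an orthogonal direct sum. -/
open ContinuousLinearMap Filter Topology Metric
open scoped InnerProductSpace

open Classical in
/-- Orthogonal projection onto a subspace, as an operator on the ambient space. -/
noncomputable def projCLM {H : Type*} [NormedAddCommGroup H] [InnerProductSpace ℂ H]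
    (K : Submodule ℂ H) : H →L[ℂ] H :=
  if h : K.HasOrthogonalProjection then K.subtypeL.comp (haveI := h; K.orthogonalProjectionOnto)
  else 0

private lemma adj_comp_self {H : Type*} [NormedAddCommGroup H] [InnerProductSpace ℂ H]
    [CompleteSpace H] (A : H →L[ℂ] H) (hA : ∀ x, ‖A x‖ = ‖x‖) (x : H) :
    adjoint A (A x) = x := by
  refine ext_inner_left ℂ (fun y => ?_)
  rw [adjoint_inner_right]
  exact LinearIsometry.inner_map_map ⟨(A : H →ₗ[ℂ] H), hA⟩ y x

theorem stmt_4 {H : Type*} [NormedAddCommGroup H] [InnerProductSpace ℂ H] [CompleteSpace H]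
    (V1 V2 : H →L[ℂ] H) (hV1 : ∀ x, ‖V1 x‖ = ‖x‖) (hV2 : ∀ x, ‖V2 x‖ = ‖x‖)
    (hcomm : V1 ∘L V2 = V2 ∘L V1)
    (V : H →L[ℂ] H) (hV : V = V1 ∘L V2)
    (W W1 W2 : Submodule ℂ H)
    (hW : W = LinearMap.ker (adjoint V : H →ₗ[ℂ] H))
    (hW1 : W1 = LinearMap.ker (adjoint V1 : H →ₗ[ℂ] H))
    (hW2 : W2 = LinearMap.ker (adjoint V2 : H →ₗ[ℂ] H)) :
    W = W1 ⊔ W2.map (V1 : H →ₗ[ℂ] H) ∧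
    W = W1.map (V2 : H →ₗ[ℂ] H) ⊔ W2 ∧
    (∀ x ∈ W1, ∀ y ∈ W2.map (V1 : H →ₗ[ℂ] H), ⟪x, y⟫_ℂ = 0) ∧
    (∀ x ∈ W1.map (V2 : H →ₗ[ℂ] H), ∀ y ∈ W2, ⟪x, y⟫_ℂ = 0) := by
  have hadj1 : adjoint V = adjoint V2 ∘L adjoint V1 := by rw [hV, adjoint_comp]
  have hadj2 : adjoint V = adjoint V1 ∘L adjoint V2 := by rw [hV, hcomm, adjoint_comp]
  subst hW hW1 hW2
  refine ⟨?_, ?_, ?_, ?_⟩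
  · apply le_antisymm
    · intro x hx
      have hx' : adjoint V x = 0 := hx
      set y := adjoint V1 x with hy
      have hw : x - V1 y ∈ LinearMap.ker (adjoint V1 : H →ₗ[ℂ] H) := by
        simp [LinearMap.mem_ker, map_sub, adj_comp_self V1 hV1, hy]
      have hyk : y ∈ LinearMap.ker (adjoint V2 : H →ₗ[ℂ] H) := by
        have : adjoint V2 (adjoint V1 x) = 0 := by
          have := congrArg (fun f => f x) hadj1
          simp only [comp_apply] at this
          rw [← this, hx']
        exact this
      have : x = (x - V1 y) + V1 y := by abel
      rw [this]
      exact Submodule.add_mem_sup hw (Submodule.mem_map_of_mem hyk)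
    · rw [sup_le_iff]
      constructor
      · intro x hx
        have hx' : adjoint V1 x = 0 := hx
        show adjoint V x = 0
        rw [hadj1, comp_apply, hx', map_zero]
      · rintro _ ⟨z, hz, rfl⟩
        have hz' : adjoint V2 z = 0 := hz
        show adjoint V (V1 z) = 0
        rw [hadj1, comp_apply, adj_comp_self V1 hV1, hz']
  · apply le_antisymm
    · intro x hx
      have hx' : adjoint V x = 0 := hx
      set y := adjoint V2 x with hy
      have hw : x - V2 y ∈ LinearMap.ker (adjoint V2 : H →ₗ[ℂ] H) := by
        simp [LinearMap.mem_ker, map_sub, adj_comp_self V2 hV2, hy]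
      have hyk : y ∈ LinearMap.ker (adjoint V1 : H →ₗ[ℂ] H) := by
        have : adjoint V1 (adjoint V2 x) = 0 := by
          have := congrArg (fun f => f x) hadj2
          simp only [comp_apply] at this
          rw [← this, hx']
        exact this
      have : x = V2 y + (x - V2 y) := by abel
      rw [this]
      exact Submodule.add_mem_sup (Submodule.mem_map_of_mem hyk) hw
    · rw [sup_le_iff]
      constructor
      · rintro _ ⟨z, hz, rfl⟩
        have hz' : adjoint V1 z = 0 := hz
        show adjoint V (V2 z) = 0
        rw [hadj2, comp_apply, adj_comp_self V2 hV2, hz']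
      · intro x hx
        have hx' : adjoint V2 x = 0 := hx
        show adjoint V x = 0
        rw [hadj2, comp_apply, hx', map_zero]
  · rintro x hx _ ⟨z, hz, rfl⟩
    have hx' : adjoint V1 x = 0 := hx
    rw [show ((V1 : H →ₗ[ℂ] H) z) = V1 z from rfl, ← adjoint_inner_left, hx', inner_zero_left]
  · rintro _ ⟨z, hz, rfl⟩ y hy
    have hy' : adjoint V2 y = 0 := hy
    rw [show ((V2 : H →ₗ[ℂ] H) z) = V2 z from rfl, ← adjoint_inner_right, hy', inner_zero_right]
end

section
/- Let (V1, V2) be commuting isometries on H with W1 = ker V1*, W2 = ker V2*. The fringe operator F2 = P_{W1} V2 |_{W1} on W1 is an isometry if and only if V2 W1 ⊆ W1 (equivalently, if and only if (V1,V2) is doubly commuting). -/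
open ContinuousLinearMap Filter Topology Metric
open scoped InnerProductSpace

theorem stmt_14 {H : Type*} [NormedAddCommGroup H] [InnerProductSpace ℂ H] [CompleteSpace H]
    (V1 V2 : H →L[ℂ] H) (hV1 : ∀ x, ‖V1 x‖ = ‖x‖) (hV2 : ∀ x, ‖V2 x‖ = ‖x‖)
    (hcomm : V1 ∘L V2 = V2 ∘L V1)
    (W1 W2 : Submodule ℂ H)
    (hW1 : W1 = LinearMap.ker (adjoint V1 : H →ₗ[ℂ] H))
    (hW2 : W2 = LinearMap.ker (adjoint V2 : H →ₗ[ℂ] H)) :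
    ((∀ η ∈ W1, ‖projCLM W1 (V2 η)‖ = ‖η‖) ↔ ∀ η ∈ W1, V2 η ∈ W1) ∧
    ((∀ η ∈ W1, ‖projCLM W1 (V2 η)‖ = ‖η‖) ↔ adjoint V1 ∘L V2 = V2 ∘L adjoint V1) := by
  have hV1' : adjoint V1 ∘L V1 = 1 := (norm_map_iff_adjoint_comp_self V1).mp hV1
  have hclosed : IsClosed (W1 : Set H) := by
    rw [hW1]; exact ContinuousLinearMap.isClosed_ker (adjoint V1)
  have : CompleteSpace W1 := hclosed.completeSpace_coe
  have hproj : W1.HasOrthogonalProjection := inferInstance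
  have hP : ∀ v : H, projCLM W1 v = (W1.orthogonalProjectionOnto v : H) := by
    intro v
    simp [projCLM, dif_pos hproj]
  -- key: norm equality iff membership
  have key : (∀ η ∈ W1, ‖projCLM W1 (V2 η)‖ = ‖η‖) ↔ ∀ η ∈ W1, V2 η ∈ W1 := by
    constructor
    · intro h η hη
      have hn := h η hη
      rw [hP] at hn
      -- Pythagoras: ‖V2 η‖² = ‖P(V2 η)‖² + ‖V2 η - P(V2 η)‖²
      set v := V2 η with hv
      have hperp : ⟪(W1.orthogonalProjectionOnto v : H), v - W1.orthogonalProjectionOnto v⟫_ℂ = 0 :=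
        (Submodule.mem_orthogonal _ _).mp (W1.sub_starProjection_mem_orthogonal v) _
          (W1.orthogonalProjectionOnto v).2
      have hpy : ‖v‖ ^ 2 = ‖(W1.orthogonalProjectionOnto v : H)‖ ^ 2
          + ‖v - W1.orthogonalProjectionOnto v‖ ^ 2 := by
        have := norm_add_sq (𝕜 := ℂ) (x := (W1.orthogonalProjectionOnto v : H))
          (y := v - W1.orthogonalProjectionOnto v)
        rw [hperp] at this
        simpa using this
      have hnv : ‖v‖ = ‖η‖ := hV2 η
      have e1 : ‖v‖ ^ 2 = ‖η‖ ^ 2 := by rw [hnv]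
      have e2 : ‖(W1.orthogonalProjectionOnto v : H)‖ ^ 2 = ‖η‖ ^ 2 := by rw [hn]
      have : ‖v - W1.orthogonalProjectionOnto v‖ ^ 2 = 0 := by linarith
      have hsub : v - (W1.orthogonalProjectionOnto v : H) = 0 := by
        have := pow_eq_zero_iff (n := 2) (by norm_num) |>.mp this
        exact norm_eq_zero.mp this
      have : (W1.orthogonalProjectionOnto v : H) = v := by
        rw [sub_eq_zero] at hsub; exact hsub.symm
      exact Submodule.starProjection_eq_self_iff.mp this
    · intro h η hη
      rw [hP, show ((W1.orthogonalProjectionOnto (V2 η) : H)) = V2 η from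
        Submodule.starProjection_eq_self_iff.mpr (h η hη)]
      exact hV2 η
  refine ⟨key, key.trans ?_⟩
  constructor
  · -- V2 W1 ⊆ W1 → doubly commuting
    intro h
    ext x
    have hw : x - V1 ((adjoint V1) x) ∈ W1 := by
      rw [hW1, LinearMap.mem_ker]
      have : (adjoint V1) (V1 ((adjoint V1) x)) = (adjoint V1) x := by
        have := congrArg (fun T => T ((adjoint V1) x)) hV1'
        simpa using this
      simp [map_sub, this]
    have h2 : (adjoint V1) (V2 (x - V1 ((adjoint V1) x))) = 0 := by
      have := h _ hw
      rw [hW1, LinearMap.mem_ker] at this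
      exact this
    have h3 : V2 (V1 ((adjoint V1) x)) = V1 (V2 ((adjoint V1) x)) := by
      have := congrArg (fun T => T ((adjoint V1) x)) hcomm
      simpa using this.symm
    have h4 : (adjoint V1) (V1 (V2 ((adjoint V1) x))) = V2 ((adjoint V1) x) := by
      have := congrArg (fun T => T (V2 ((adjoint V1) x))) hV1'
      simpa using this
    have : (adjoint V1) (V2 x) = V2 ((adjoint V1) x) := by
      have hx : V2 x = V2 (x - V1 ((adjoint V1) x)) + V2 (V1 ((adjoint V1) x)) := by
        rw [← map_add, sub_add_cancel]
      rw [hx, map_add, h2, zero_add, h3, h4]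
    simpa using this
  · -- doubly commuting → V2 W1 ⊆ W1
    intro h η hη
    rw [hW1, LinearMap.mem_ker] at hη ⊢
    have := congrArg (fun T => T η) h
    simp only [comp_apply] at this
    simp only [ContinuousLinearMap.coe_coe] at hη ⊢
    rw [this, hη, map_zero]
end
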